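/- For every x ∈ W1, G(x) = 1. -/
import Mathlib

/-- `w a b δ n = n + a⌊n/a⌋ + b⌊n/δ⌋`. -/
def w (a b δ n : ℕ) : ℕ := n + a * (n / a) + b * (n / δ)

/-- `W1 = {w n + a : n ∈ ℕ}`. -/
def W1 (a b δ : ℕ) : Set ℕ := {x | ∃ n, x = w a b δ n + a}

/-- `mex T` is the least natural number not in `T`. -/
noncomputable def mex (T : Set ℕ) : ℕ := sInf {n | n ∉ T}

lemma w_mono (a b δ : ℕ) {m n : ℕ} (h : m ≤ n) : w a b δ m ≤ w a b δ n :=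
  add_le_add (add_le_add h (Nat.mul_le_mul_left _ (Nat.div_le_div_right h)))
    (Nat.mul_le_mul_left _ (Nat.div_le_div_right h))

/-- Differences `a`, `a+δ`, `2a+δ` never occur between two `w`-values. -/
lemma no_diff (a δ : ℕ) (ha : 0 < a) (hlt : a < δ) (hlt2 : δ < 2 * a)
    (d : ℕ) (hd : d = a ∨ d = a + δ ∨ d = 2 * a + δ) :
    ∀ m n : ℕ, w a (a + δ) δ m + d ≠ w a (a + δ) δ n := by
  intro m n h
  have hd0 : 0 < d := by omega
  rcases le_or_gt n m with hnm | hmn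
  · have := w_mono a (a + δ) δ hnm
    omega
  · obtain ⟨P, hP⟩ : ∃ P, n / a = m / a + P := by
      have := Nat.div_le_div_right (c := a) (le_of_lt hmn)
      exact ⟨n / a - m / a, by omega⟩
    obtain ⟨Q, hQ⟩ : ∃ Q, n / δ = m / δ + Q := by
      have := Nat.div_le_div_right (c := δ) (le_of_lt hmn)
      exact ⟨n / δ - m / δ, by omega⟩
    have e1 := Nat.div_add_mod n a
    have e2 := Nat.div_add_mod m a
    have e3 := Nat.div_add_mod n δ
    have e4 := Nat.div_add_mod m δ
    have r1 : n % a < a := Nat.mod_lt n ha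
    have r2 : m % a < a := Nat.mod_lt m ha
    have hδ : 0 < δ := by omega
    have r3 : n % δ < δ := Nat.mod_lt n hδ
    have r4 : m % δ < δ := Nat.mod_lt m hδ
    rw [hP, Nat.mul_add] at e1
    rw [hQ, Nat.mul_add] at e3
    simp only [w] at h
    rw [hP, hQ, Nat.mul_add, Nat.mul_add] at h
    have hsplit1 : (a + δ) * (m / δ) = a * (m / δ) + δ * (m / δ) := by ring
    have hsplit2 : (a + δ) * Q = a * Q + δ * Q := by ring
    rw [hsplit1, hsplit2] at h
    have hQ1 : Q ≤ 1 := by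
      by_contra hq
      have h2a : a * 2 ≤ a * Q := Nat.mul_le_mul_left a (by omega)
      have h2d : δ * 2 ≤ δ * Q := Nat.mul_le_mul_left δ (by omega)
      omega
    have hP3 : P ≤ 3 := by
      by_contra hp
      have h4a : a * 4 ≤ a * P := Nat.mul_le_mul_left a (by omega)
      have h0a : 0 ≤ a * Q := Nat.zero_le _
      omega
    rcases hd with rfl | rfl | rfl <;>
      interval_cases P <;> interval_cases Q <;> omega

/-- Covering: every natural number is `w n + c` for some `c ∈ {0, a, a+δ, 2a+δ}`. -/
lemma cover (a δ : ℕ) (ha : 0 < a) (hlt : a < δ) (hlt2 : δ < 2 * a) :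
    ∀ x : ℕ, ∃ n c, (c = 0 ∨ c = a ∨ c = a + δ ∨ c = 2 * a + δ) ∧
      x = w a (a + δ) δ n + c := by
  intro x
  induction x using Nat.strong_induction_on with
  | _ x ih =>
  have hδ : 0 < δ := by omega
  by_cases hxa : x < a
  · exact ⟨x, 0, Or.inl rfl, by
      simp [w, Nat.div_eq_of_lt hxa, Nat.div_eq_of_lt (hxa.trans hlt)]⟩
  by_cases hx2a : x < 2 * a
  · refine ⟨x - a, a, Or.inr (Or.inl rfl), ?_⟩
    have h1 : x - a < a := by omega
    have h2 : x - a < δ := by omega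
    simp [w, Nat.div_eq_of_lt h1, Nat.div_eq_of_lt h2]
    omega
  · obtain ⟨n, c, hc, he⟩ := ih (x - 2 * a) (by omega)
    have hna : (n + a) / a = n / a + 1 := Nat.add_div_right n ha
    have hE1 : n / δ ≤ (n + a) / δ := Nat.div_le_div_right (by omega)
    have hE2 : (n + a) / δ ≤ n / δ + 1 := by
      have h := Nat.div_le_div_right (c := δ) (show n + a ≤ n + δ by omega)
      rwa [Nat.add_div_right n hδ] at h
    have hwa : w a (a + δ) δ (n + a) + (a + δ) * (n / δ)
        = w a (a + δ) δ n + 2 * a + (a + δ) * ((n + a) / δ) := by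
      simp only [w, hna, Nat.mul_add, Nat.mul_one]
      ring
    rcases (show (n + a) / δ = n / δ ∨ (n + a) / δ = n / δ + 1 by omega) with hE | hE
    · -- no δ-crossing: w(n+a) = w n + 2a
      rw [hE] at hwa
      exact ⟨n + a, c, hc, by omega⟩
    · -- crossing: w(n+a) = w n + 3a + δ
      rw [hE, Nat.mul_add, Nat.mul_one] at hwa
      rcases hc with hc | hc | hc | hc
      · -- c = 0 : x = w n + 2a
        have hδn : δ ≤ n + a := by
          by_contra h'
          push_neg at h'
          have t1 : (n + a) / δ = 0 := Nat.div_eq_of_lt h'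
          have t2 : n / δ = 0 := Nat.div_eq_of_lt (by omega)
          omega
        have e3 := Nat.div_add_mod n δ
        have r3 : n % δ < δ := Nat.mod_lt n hδ
        have h5 := Nat.div_add_mod (n + a) δ
        rw [hE, Nat.mul_add, Nat.mul_one] at h5
        have r5 : (n + a) % δ < δ := Nat.mod_lt _ hδ
        have hm2δ : (n + a - δ) / δ = n / δ :=
          Nat.div_eq_of_lt_le (by rw [Nat.mul_comm]; omega)
            (by rw [Nat.add_mul, Nat.one_mul, Nat.mul_comm (n / δ) δ]; omega)
        have hm2a0 : (n + a - δ) / a ≤ n / a := Nat.div_le_div_right (by omega)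
        have hm2a : n / a ≤ (n + a - δ) / a + 1 := by
          have h := Nat.div_le_div_right (c := a) (show n ≤ (n + a - δ) + a by omega)
          rwa [Nat.add_div_right _ ha] at h
        have hwm2 : w a (a + δ) δ n + a + a * ((n + a - δ) / a)
            = w a (a + δ) δ (n + a - δ) + δ + a * (n / a) := by
          simp only [w]
          rw [hm2δ]
          omega
        rcases (show n / a = (n + a - δ) / a ∨ n / a = (n + a - δ) / a + 1 by omega) with hA | hA
        · rw [hA] at hwm2
          exact ⟨n + a - δ, a + δ, Or.inr (Or.inr (Or.inl rfl)), by omega⟩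
        · rw [hA, Nat.mul_add, Nat.mul_one] at hwm2
          exact ⟨n + a - δ, 2 * a + δ, Or.inr (Or.inr (Or.inr rfl)), by omega⟩
      · -- c = a : x = w n + 3a
        have hδn : δ ≤ n + a := by
          by_contra h'
          push_neg at h'
          have t1 : (n + a) / δ = 0 := Nat.div_eq_of_lt h'
          have t2 : n / δ = 0 := Nat.div_eq_of_lt (by omega)
          omega
        have e3 := Nat.div_add_mod n δ
        have r3 : n % δ < δ := Nat.mod_lt n hδ
        have h5 := Nat.div_add_mod (n + a) δ
        rw [hE, Nat.mul_add, Nat.mul_one] at h5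
        have r5 : (n + a) % δ < δ := Nat.mod_lt _ hδ
        have hm2δ : (n + a - δ) / δ = n / δ :=
          Nat.div_eq_of_lt_le (by rw [Nat.mul_comm]; omega)
            (by rw [Nat.add_mul, Nat.one_mul, Nat.mul_comm (n / δ) δ]; omega)
        have hm2a0 : (n + a - δ) / a ≤ n / a := Nat.div_le_div_right (by omega)
        have hm2a : n / a ≤ (n + a - δ) / a + 1 := by
          have h := Nat.div_le_div_right (c := a) (show n ≤ (n + a - δ) + a by omega)
          rwa [Nat.add_div_right _ ha] at h
        have hwm2 : w a (a + δ) δ n + a + a * ((n + a - δ) / a)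
            = w a (a + δ) δ (n + a - δ) + δ + a * (n / a) := by
          simp only [w]
          rw [hm2δ]
          omega
        rcases (show n / a = (n + a - δ) / a ∨ n / a = (n + a - δ) / a + 1 by omega) with hA | hA
        · rw [hA] at hwm2
          exact ⟨n + a - δ, 2 * a + δ, Or.inr (Or.inr (Or.inr rfl)), by omega⟩
        · -- A' = 1 : use m1 = n + 2a - δ = m2 + a
          rw [hA, Nat.mul_add, Nat.mul_one] at hwm2
          have hm1a : (n + 2 * a - δ) / a = n / a := by
            rw [show n + 2 * a - δ = (n + a - δ) + a by omega, Nat.add_div_right _ ha]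
            omega
          have hB0 : n / δ ≤ (n + 2 * a - δ) / δ := Nat.div_le_div_right (by omega)
          have hB1 : (n + 2 * a - δ) / δ ≤ n / δ + 1 := by
            have h := Nat.div_le_div_right (c := δ) (show n + 2 * a - δ ≤ n + δ by omega)
            rwa [Nat.add_div_right n hδ] at h
          have hwm1 : w a (a + δ) δ (n + 2 * a - δ) + δ + (a + δ) * (n / δ)
              = w a (a + δ) δ n + 2 * a + (a + δ) * ((n + 2 * a - δ) / δ) := by
            simp only [w]
            rw [hm1a]
            omega
          rcases (show (n + 2 * a - δ) / δ = n / δ ∨ (n + 2 * a - δ) / δ = n / δ + 1 by omega)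
            with hB | hB
          · rw [hB] at hwm1
            exact ⟨n + 2 * a - δ, a + δ, Or.inr (Or.inr (Or.inl rfl)), by omega⟩
          · rw [hB, Nat.mul_add, Nat.mul_one] at hwm1
            exact ⟨n + 2 * a - δ, 0, Or.inl rfl, by omega⟩

      · -- c = a + δ : x = w n + (a+δ) + 2a = w(n+a)
        exact ⟨n + a, 0, Or.inl rfl, by omega⟩
      · -- c = 2a + δ : x = w(n+a) + a
        exact ⟨n + a, a, Or.inr (Or.inl rfl), by omega⟩

lemma mex_eq_zero {T : Set ℕ} (h : 0 ∉ T) : mex T = 0 :=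
  Nat.sInf_eq_zero.mpr (Or.inl h)

lemma mex_eq_one {T : Set ℕ} (h0 : 0 ∈ T) (h1 : 1 ∉ T) : mex T = 1 := by
  have hle : mex T ≤ 1 := Nat.sInf_le h1
  have hne : mex T ≠ 0 := by
    intro h
    have hmem : mex T ∈ {n | n ∉ T} := Nat.sInf_mem ⟨1, h1⟩
    rw [h] at hmem
    exact hmem h0
  omega

lemma mex_notmem {T : Set ℕ} (hne : ∃ n, n ∉ T) : mex T ∉ T :=
  Nat.sInf_mem hne

/-- The set of Grundy values of options. -/
def TT (G : ℕ → ℕ) (a d x : ℕ) : Set ℕ :=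
  {v | ∃ s ∈ ({a, a + d, a + (a + d)} : Set ℕ), s ≤ x ∧ v = G (x - s)}

lemma TT_mem {G : ℕ → ℕ} {a d x v : ℕ} :
    v ∈ TT G a d x ↔
      ∃ s, (s = a ∨ s = a + d ∨ s = a + (a + d)) ∧ s ≤ x ∧ v = G (x - s) := by
  simp only [TT, Set.mem_setOf_eq, Set.mem_insert_iff, Set.mem_singleton_iff]

/-- If `G` is the Grundy function of the subtraction game with moves
`S = {a, b, a+b}`, then `G x = 1` for every `x ∈ W1`. -/
theorem stmt_16 (a δ : ℕ) (ha : 0 < a) (hlt : a < δ) (hlt2 : δ < 2 * a)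
    (hgcd : Nat.gcd a δ = 1) (b : ℕ) (hb : b = a + δ)
    (G : ℕ → ℕ)
    (hG : ∀ x, G x = mex {v | ∃ s ∈ ({a, b, a + b} : Set ℕ), s ≤ x ∧ v = G (x - s)}) :
    ∀ x ∈ W1 a b δ, G x = 1 := by
  subst hb
  have nd := no_diff a δ ha hlt hlt2
  have cov := cover a δ ha hlt hlt2
  have hGx : ∀ x, G x = mex (TT G a δ x) := hG
  have main : ∀ x, (G x = 0 ↔ ∃ n, x = w a (a + δ) δ n) ∧
      (G x = 1 ↔ ∃ n, x = w a (a + δ) δ n + a) := by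
    intro x
    induction x using Nat.strong_induction_on with
    | _ x ih =>
    by_cases h0 : ∃ n, x = w a (a + δ) δ n
    · obtain ⟨n, hx⟩ := h0
      have hT0 : (0 : ℕ) ∉ TT G a δ x := by
        intro hmem
        obtain ⟨s, hs, hsx, hv⟩ := TT_mem.mp hmem
        have hs0 : 0 < s := by rcases hs with rfl | rfl | rfl <;> omega
        obtain ⟨m, hm⟩ := (ih (x - s) (by omega)).1.mp hv.symm
        have heq : w a (a + δ) δ m + s = w a (a + δ) δ n := by omega
        exact nd s (by rcases hs with rfl | rfl | rfl <;> omega) m n heq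
      have hg0 : G x = 0 := by rw [hGx x]; exact mex_eq_zero hT0
      refine ⟨⟨fun _ => ⟨n, hx⟩, fun _ => hg0⟩, ?_, ?_⟩
      · intro h1
        exact absurd (hg0.symm.trans h1) (by norm_num)
      · rintro ⟨m, hm⟩
        exact (nd a (Or.inl rfl) m n (by omega)).elim
    by_cases h1 : ∃ n, x = w a (a + δ) δ n + a
    · obtain ⟨n, hx⟩ := h1
      have hG0 : G (w a (a + δ) δ n) = 0 :=
        (ih _ (by omega)).1.mpr ⟨n, rfl⟩
      have hT0 : (0 : ℕ) ∈ TT G a δ x := by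
        refine TT_mem.mpr ⟨a, Or.inl rfl, by omega, ?_⟩
        rw [show x - a = w a (a + δ) δ n by omega]
        exact hG0.symm
      have hT1 : (1 : ℕ) ∉ TT G a δ x := by
        intro hmem
        obtain ⟨s, hs, hsx, hv⟩ := TT_mem.mp hmem
        have hs0 : 0 < s := by rcases hs with rfl | rfl | rfl <;> omega
        obtain ⟨m, hm⟩ := (ih (x - s) (by omega)).2.mp hv.symm
        have heq : w a (a + δ) δ m + s = w a (a + δ) δ n := by omega
        exact nd s (by rcases hs with rfl | rfl | rfl <;> omega) m n heq
      have hg1 : G x = 1 := by rw [hGx x]; exact mex_eq_one hT0 hT1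
      refine ⟨⟨?_, ?_⟩, fun _ => ⟨n, hx⟩, fun _ => hg1⟩
      · intro h
        exact absurd (h.symm.trans hg1) (by norm_num)
      · intro hw
        exact absurd hw h0
    · obtain ⟨m, c, hc, hxe⟩ := cov x
      have hc2 : c = a + δ ∨ c = 2 * a + δ := by
        rcases hc with hc | hc | hc | hc
        · exact absurd ⟨m, by omega⟩ h0
        · exact absurd ⟨m, by omega⟩ h1
        · exact Or.inl hc
        · exact Or.inr hc
      have hGm : G (x - c) = 0 := by
        rw [show x - c = w a (a + δ) δ m by omega]
        exact (ih _ (by omega)).1.mpr ⟨m, rfl⟩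
      have hT0 : (0 : ℕ) ∈ TT G a δ x := by
        rcases hc2 with hc' | hc'
        · refine TT_mem.mpr ⟨a + δ, Or.inr (Or.inl rfl), by omega, ?_⟩
          rw [show x - (a + δ) = x - c by omega]
          exact hGm.symm
        · refine TT_mem.mpr ⟨a + (a + δ), Or.inr (Or.inr rfl), by omega, ?_⟩
          rw [show x - (a + (a + δ)) = x - c by omega]
          exact hGm.symm
      have hT1 : (1 : ℕ) ∈ TT G a δ x := by
        obtain ⟨k, c', hc', hke⟩ := cov (x - a)
        have hax : a ≤ x := by omega
        rcases hc' with hc' | hc' | hc' | hc'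
        · exact absurd ⟨k, by omega⟩ h1
        · refine TT_mem.mpr ⟨a, Or.inl rfl, hax, ?_⟩
          exact ((ih (x - a) (by omega)).2.mpr ⟨k, by omega⟩).symm
        · refine TT_mem.mpr ⟨a + δ, Or.inr (Or.inl rfl), by omega, ?_⟩
          exact ((ih (x - (a + δ)) (by omega)).2.mpr ⟨k, by omega⟩).symm
        · refine TT_mem.mpr ⟨a + (a + δ), Or.inr (Or.inr rfl), by omega, ?_⟩
          exact ((ih (x - (a + (a + δ))) (by omega)).2.mpr ⟨k, by omega⟩).symm
      have hne : ∃ v, v ∉ TT G a δ x := by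
        refine ⟨G (x - a) + G (x - (a + δ)) + G (x - (a + (a + δ))) + 1, ?_⟩
        intro hmem
        obtain ⟨s, hs, hsx, hv⟩ := TT_mem.mp hmem
        rcases hs with rfl | rfl | rfl <;> omega
      have hgx : G x ∉ TT G a δ x := by rw [hGx x]; exact mex_notmem hne
      have hg0 : G x ≠ 0 := fun h => hgx (by rw [h]; exact hT0)
      have hg1 : G x ≠ 1 := fun h => hgx (by rw [h]; exact hT1)
      exact ⟨⟨fun h => absurd h hg0, fun hw => absurd hw h0⟩,
        fun h => absurd h hg1, fun hw => absurd hw h1⟩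
  rintro x ⟨n, hn⟩
  exact (main x).2.mpr ⟨n, hn⟩
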